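/- arXiv:1810.09342 — 2 statements merged into one kernel-verified Lean document; each statement's English description precedes it below -/
import Mathlib

section
/- Let X be a finite nonempty set and F : X → ℝ an objective function. For each temperature T > 0 let A(T) = (a_{ij}(T)) be a row-stochastic generation matrix indexed by X, define the acceptance probability ℙ_{ij}(T) = 1 if F(x_j) < F(x_i) and ℙ_{ij}(T) = exp(−(F(x_j) − F(x_i))/T) otherwise, and define the transition matrix M(T) by m_{ij}(T) = a_{ij}(T)·ℙ_{ij}(T) for i ≠ j and m_{ii}(T) = 1 − Σ_{j≠i} m_{ij}(T). Assume: (a) for every T > 0, M(T) is irreducible (for all i, j there is k ≥ 1 with (M(T)^k)_{ij} > 0) and aperiodic, and π_T is a stationary probability distribution of M(T) (π_T M(T) = π_T); (b) the limit π* = lim_{T→0+} π_T exists; (i) there exists δ > 0 such that for all T > 0 and all i ≠ j, a_{ij}(T) > 0 implies a_{ij}(T) ≥ δ; (ii) the edge set E = {(i,j) : i ≠ j, a_{ij}(T) > 0} of the neighborhood graph G = (X, E) does not depend on T; (iii) G is weakly reversible, i.e. for every real number F̃ and every pair of states x, y ∈ X, there exists a directed path (x, v₁, …, v_m, y) in G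 with F(v_k) ≤ F̃ for all k = 1, …, m if and only if there exists such a directed path from y to x. Then for every x ∈ X, π*(x) > 0 if and only if F(x) = min_{y ∈ X} F(y). -/
open Filter Topology

/-- There is a directed path in the graph with edge set `E` from `x` to `y`
whose intermediate vertices `v` (the entries of `l`) all satisfy `F v ≤ Ftil`. -/
def ExistsPathBelow {X : Type*} (E : Set (X × X)) (F : X → ℝ) (Ftil : ℝ)
    (x y : X) : Prop :=
  ∃ l : List X, List.Chain (fun a b => (a, b) ∈ E) x (l ++ [y]) ∧ ∀ v ∈ l, F v ≤ Ftil

section AuxiliarySimulatedAnnealing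

open Finset Function

variable {X : Type*} [Fintype X] [DecidableEq X]
set_option linter.unusedSectionVars false
set_option linter.unusedVariables false

/-- orbit transfer: if the `f`-orbit of `v` hits the set `A`, and from every
point of `A` the `g`-orbit reaches `z`, and `g = f` off `A`, then the `g`-orbit
of `v` reaches `z`. -/
lemma reach_of_agree (f g : X → X) (A : Set X) (z : X)
    (hag : ∀ v, v ∉ A → g v = f v) (hA : ∀ a ∈ A, ∃ t, g^[t] a = z) :
    ∀ k v, f^[k] v ∈ A → ∃ t, g^[t] v = z := by
  intro k
  induction k with
  | zero => intro v hv; exact hA v hv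
  | succ k ih =>
    intro v hv
    by_cases hvA : v ∈ A
    · exact hA v hvA
    · rw [iterate_succ_apply] at hv
      obtain ⟨t, ht⟩ := ih (f v) hv
      exact ⟨t + 1, by rw [iterate_succ_apply, hag v hvA]; exact ht⟩

open Classical in
noncomputable def arbSet (r : X) : Finset (X → X) :=
  univ.filter (fun f => f r = r ∧ ∀ v, ∃ k, f^[k] v = r)

lemma mem_arbSet {r : X} {f : X → X} :
    f ∈ arbSet r ↔ f r = r ∧ ∀ v, ∃ k, f^[k] v = r := by
  classical
  simp [arbSet]

noncomputable def wt (m : X → X → ℝ) (r : X) (f : X → X) : ℝ :=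
  ∏ v ∈ univ.erase r, m v (f v)

noncomputable def tau (m : X → X → ℝ) (r : X) : ℝ := ∑ f ∈ arbSet r, wt m r f
set_option linter.unusedSectionVars false

-- iterate periodicity helper
lemma iterate_period {f : X → X} {y : X} {p : ℕ} (hp : f^[p] y = y) :
    ∀ q r, f^[q * p + r] y = f^[r] y := by
  intro q r
  induction q with
  | zero => simp
  | succ q ih =>
    have : (q + 1) * p + r = (q * p + r) + p := by ring
    rw [this, iterate_add_apply, hp, ih]

open Classical in
/-- the predecessor of `y` on the cycle through `y` (if `y` is periodic). -/
noncomputable def cpred (h : X → X) (y : X) : X :=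
  if hp : ∃ k, h^[k + 1] y = y then h^[Nat.find hp] y else y

lemma cpred_spec {h : X → X} {y : X} (hp : ∃ k, h^[k + 1] y = y) :
    h (cpred h y) = y := by
  classical
  rw [cpred, dif_pos hp]
  have := Nat.find_spec hp
  rwa [iterate_succ_apply'] at this

lemma cpred_exists {h : X → X} {y : X} (hr : ∀ v, ∃ k, h^[k] v = y) :
    ∃ k, h^[k + 1] y = y := by
  obtain ⟨k, hk⟩ := hr (h y)
  exact ⟨k, by rwa [iterate_succ_apply]⟩

/-- key recovery fact: if `f` is an arborescence to `i` (with `i ≠ y`), then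
the cycle-predecessor of `y` in `update f i y` is `i`. -/
lemma cpred_update {f : X → X} {i y : X} (hiy : i ≠ y)
    (hreach : ∀ v, ∃ k, f^[k] v = i) :
    cpred (Function.update f i y) y = i := by
  classical
  set h := Function.update f i y with hh
  have hq : ∃ t, f^[t] y = i := hreach y
  set t := Nat.find hq with ht
  have hts : f^[t] y = i := Nat.find_spec hq
  have claimA : ∀ s, s ≤ t → h^[s] y = f^[s] y := by
    intro s hs
    induction s with
    | zero => simp
    | succ s ih =>
      have hs' : s ≤ t := Nat.le_of_succ_le hs
      have hne : f^[s] y ≠ i := Nat.find_min hq (Nat.lt_of_succ_le hs)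
      rw [iterate_succ_apply', iterate_succ_apply', ih hs', hh,
        Function.update_of_ne hne]
  have hB : h^[t + 1] y = y := by
    rw [iterate_succ_apply', claimA t le_rfl, hts, hh, Function.update_self]
  have hp : ∃ k, h^[k + 1] y = y := ⟨t, hB⟩
  have hk0 : Nat.find hp = t := by
    have hle : Nat.find hp ≤ t := Nat.find_min' hp hB
    rcases lt_or_eq_of_le hle with hlt | heq
    · exfalso
      have hper : h^[Nat.find hp + 1] y = y := Nat.find_spec hp
      have hfp : f^[Nat.find hp + 1] y = y := by
        rw [← claimA _ (Nat.succ_le_of_lt hlt)]; exact hper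
      set p := Nat.find hp + 1 with hpdef
      have hplet : p ≤ t := Nat.succ_le_of_lt hlt
      have hmod : f^[t % p] y = i := by
        have := iterate_period hfp (t / p) (t % p)
        rw [Nat.div_add_mod'] at this
        rw [← this]; exact hts
      have hmodlt : t % p < t := lt_of_lt_of_le (Nat.mod_lt _ (Nat.succ_pos _)) hplet
      exact Nat.find_min hq hmodlt hmod
    · exact heq
  rw [cpred, dif_pos hp, hk0, claimA t le_rfl, hts]

open Classical in
noncomputable def Hset (y : X) : Finset (X → X) :=
  univ.filter (fun h => h y ≠ y ∧ ∀ v, ∃ k, h^[k] v = y)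

lemma mem_Hset {y : X} {h : X → X} :
    h ∈ Hset y ↔ h y ≠ y ∧ ∀ v, ∃ k, h^[k] v = y := by
  classical
  simp [Hset]

lemma cpred_orbit {h : X → X} {y : X} (hp : ∃ k, h^[k + 1] y = y) :
    ∃ s, h^[s] y = cpred h y := by
  classical
  rw [cpred, dif_pos hp]
  exact ⟨_, rfl⟩

lemma update_fixed {f : X → X} {i : X} (hfi : f i = i) :
    Function.update f i i = f := by
  funext v
  rcases eq_or_ne v i with rfl | hv
  · rw [Function.update_self, hfi]
  · rw [Function.update_of_ne hv]

lemma update_eq_self_of {h : X → X} {c y : X} (hcy : h c = y) :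
    Function.update h c y = h := by
  subst hcy
  exact Function.update_eq_self c h

lemma tree_identity (m : X → X → ℝ) (y : X) :
    ∑ i ∈ univ.erase y, tau m i * m i y = tau m y * ∑ j ∈ univ.erase y, m y j := by
  classical
  set W : (X → X) → ℝ := fun h => ∏ v, m v (h v) with hWdef
  -- LHS as a sum over the sigma set
  have LHS1 : ∑ i ∈ univ.erase y, tau m i * m i y
      = ∑ p ∈ (univ.erase y).sigma (fun i => arbSet i), wt m p.1 p.2 * m p.1 y := by
    rw [Finset.sum_sigma]
    refine Finset.sum_congr rfl fun i _ => ?_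
    rw [tau, Finset.sum_mul]
  have RHS1 : tau m y * ∑ j ∈ univ.erase y, m y j
      = ∑ p ∈ (arbSet y) ×ˢ (univ.erase y), wt m y p.1 * m y p.2 := by
    rw [tau, Finset.sum_mul_sum, Finset.sum_product]
  -- first bijection
  have B1 : ∑ p ∈ (univ.erase y).sigma (fun i => arbSet i), wt m p.1 p.2 * m p.1 y
      = ∑ h ∈ Hset y, W h := by
    refine Finset.sum_nbij' (fun p => Function.update p.2 p.1 y)
      (fun h => ⟨cpred h y, Function.update h (cpred h y) (cpred h y)⟩)
      ?_ ?_ ?_ ?_ ?_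
    · rintro ⟨i, f⟩ hp
      dsimp only
      simp only [Finset.mem_sigma, Finset.mem_erase] at hp
      obtain ⟨⟨hiy, -⟩, hf⟩ := hp
      rw [mem_arbSet] at hf
      obtain ⟨hfi, hreach⟩ := hf
      rw [mem_Hset]
      constructor
      · rw [Function.update_of_ne (Ne.symm hiy)]
        intro hfyy
        obtain ⟨k, hk⟩ := hreach y
        rw [Function.iterate_fixed hfyy] at hk
        exact hiy hk.symm
      · intro v
        obtain ⟨k, hk⟩ := hreach v
        refine reach_of_agree f (Function.update f i y) {i} y
          (fun w hw => Function.update_of_ne hw _ _) ?_ k v hk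
        rintro a rfl
        exact ⟨1, by simp⟩
    · intro h hh
      rw [mem_Hset] at hh
      obtain ⟨hhy, hreach⟩ := hh
      have hp : ∃ k, h^[k + 1] y = y := cpred_exists hreach
      have hcy : h (cpred h y) = y := cpred_spec hp
      have hcne : cpred h y ≠ y := by
        intro hc
        rw [hc] at hcy
        exact hhy hcy
      simp only [Finset.mem_sigma, Finset.mem_erase]
      refine ⟨⟨hcne, Finset.mem_univ _⟩, ?_⟩
      rw [mem_arbSet]
      refine ⟨Function.update_self _ _ _, ?_⟩
      intro v
      obtain ⟨k0, hk0⟩ := hreach v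
      obtain ⟨s, hs⟩ := cpred_orbit hp
      have hvc : h^[s + k0] v = cpred h y := by
        rw [Function.iterate_add_apply, hk0, hs]
      refine reach_of_agree h (Function.update h (cpred h y) (cpred h y))
        {cpred h y} (cpred h y)
        (fun w hw => Function.update_of_ne hw _ _) ?_ (s + k0) v hvc
      rintro a rfl
      exact ⟨0, by simp⟩
    · rintro ⟨i, f⟩ hp
      dsimp only
      simp only [Finset.mem_sigma, Finset.mem_erase] at hp
      obtain ⟨⟨hiy, -⟩, hf⟩ := hp
      rw [mem_arbSet] at hf
      obtain ⟨hfi, hreach⟩ := hf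
      have hreach' : ∀ v, ∃ k, f^[k] v = i := hreach
      have hc : cpred (Function.update f i y) y = i := cpred_update hiy hreach'
      simp only [hc, Function.update_idem, update_fixed hfi]
    · intro h hh
      dsimp only
      rw [mem_Hset] at hh
      obtain ⟨hhy, hreach⟩ := hh
      have hp : ∃ k, h^[k + 1] y = y := cpred_exists hreach
      have hcy : h (cpred h y) = y := cpred_spec hp
      rw [Function.update_idem, update_eq_self_of hcy]
    · rintro ⟨i, f⟩ hp
      dsimp only
      simp only [Finset.mem_sigma, Finset.mem_erase] at hp
      obtain ⟨⟨hiy, -⟩, hf⟩ := hp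
      simp only [hWdef]
      rw [← Finset.mul_prod_erase univ _ (Finset.mem_univ i),
        Function.update_self, wt, mul_comm]
      congr 1
      refine Finset.prod_congr rfl fun v hv => ?_
      rw [Function.update_of_ne (Finset.ne_of_mem_erase hv)]
  -- second bijection
  have B2 : ∑ p ∈ (arbSet y) ×ˢ (univ.erase y), wt m y p.1 * m y p.2
      = ∑ h ∈ Hset y, W h := by
    refine Finset.sum_nbij' (fun p => Function.update p.1 y p.2)
      (fun h => (Function.update h y y, h y)) ?_ ?_ ?_ ?_ ?_
    · rintro ⟨g, j⟩ hp
      dsimp only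
      simp only [Finset.mem_product, Finset.mem_erase] at hp
      obtain ⟨hg, hjy, -⟩ := hp
      rw [mem_arbSet] at hg
      obtain ⟨hgy, hreach⟩ := hg
      rw [mem_Hset]
      refine ⟨by rw [Function.update_self]; exact hjy, ?_⟩
      intro v
      obtain ⟨k, hk⟩ := hreach v
      refine reach_of_agree g (Function.update g y j) {y} y
        (fun w hw => Function.update_of_ne hw _ _) ?_ k v hk
      rintro a rfl
      exact ⟨0, by simp⟩
    · intro h hh
      rw [mem_Hset] at hh
      obtain ⟨hhy, hreach⟩ := hh
      simp only [Finset.mem_product, Finset.mem_erase]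
      refine ⟨?_, hhy, Finset.mem_univ _⟩
      rw [mem_arbSet]
      refine ⟨Function.update_self _ _ _, fun v => ?_⟩
      obtain ⟨k, hk⟩ := hreach v
      refine reach_of_agree h (Function.update h y y) {y} y
        (fun w hw => Function.update_of_ne hw _ _) ?_ k v hk
      rintro a rfl
      exact ⟨0, by simp⟩
    · rintro ⟨g, j⟩ hp
      dsimp only
      simp only [Finset.mem_product, Finset.mem_erase] at hp
      obtain ⟨hg, hjy, -⟩ := hp
      rw [mem_arbSet] at hg
      obtain ⟨hgy, -⟩ := hg
      simp only [Function.update_self, Function.update_idem, Prod.mk.injEq]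
      exact ⟨update_fixed hgy, trivial⟩
    · intro h hh
      dsimp only
      rw [mem_Hset] at hh
      rw [Function.update_idem]
      exact update_eq_self_of rfl
    · rintro ⟨g, j⟩ hp
      dsimp only
      simp only [Finset.mem_product, Finset.mem_erase] at hp
      obtain ⟨hg, hjy, -⟩ := hp
      simp only [hWdef]
      rw [← Finset.mul_prod_erase univ _ (Finset.mem_univ y),
        Function.update_self, wt, mul_comm]
      congr 1
      refine Finset.prod_congr rfl fun v hv => ?_
      rw [Function.update_of_ne (Finset.ne_of_mem_erase hv)]
  rw [LHS1, RHS1, B1, B2]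

lemma tau_stat (m : X → X → ℝ) (hrow : ∀ i, ∑ j, m i j = 1) (y : X) :
    ∑ i, tau m i * m i y = tau m y := by
  classical
  rw [← Finset.add_sum_erase _ _ (Finset.mem_univ y), tree_identity]
  have : ∑ j ∈ univ.erase y, m y j = 1 - m y y := by
    have h := hrow y
    rw [← Finset.add_sum_erase _ _ (Finset.mem_univ y)] at h
    linarith
  rw [this]
  ring

lemma pow_entry_nonneg {M : Matrix X X ℝ} (hM : ∀ i j, 0 ≤ M i j) (k : ℕ) :
    ∀ i j, 0 ≤ (M ^ k) i j := by
  induction k with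
  | zero => intro i j; rw [pow_zero]; by_cases h : i = j <;> simp [Matrix.one_apply, h]
  | succ k ih =>
    intro i j
    rw [pow_succ, Matrix.mul_apply]
    exact Finset.sum_nonneg fun l _ => mul_nonneg (ih i l) (hM l j)

lemma stat_pow {M : Matrix X X ℝ} {v : X → ℝ}
    (hv : ∀ j, ∑ i, v i * M i j = v j) (k : ℕ) :
    ∀ j, ∑ i, v i * (M ^ k) i j = v j := by
  induction k with
  | zero =>
    intro j
    rw [pow_zero]
    rw [Finset.sum_eq_single j]
    · simp [Matrix.one_apply]
    · intro b _ hb; simp [Matrix.one_apply, hb]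
    · intro h; exact absurd (Finset.mem_univ j) h
  | succ k ih =>
    intro j
    have : ∀ i, v i * (M ^ (k + 1)) i j = ∑ l, v i * ((M ^ k) i l * M l j) := by
      intro i
      rw [pow_succ, Matrix.mul_apply, Finset.mul_sum]
    rw [Finset.sum_congr rfl fun i _ => this i, Finset.sum_comm]
    calc ∑ l, ∑ i, v i * ((M ^ k) i l * M l j)
        = ∑ l, (∑ i, v i * (M ^ k) i l) * M l j := by
          refine Finset.sum_congr rfl fun l _ => ?_
          rw [Finset.sum_mul]
          exact Finset.sum_congr rfl fun i _ => by ring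
      _ = ∑ l, v l * M l j := by
          refine Finset.sum_congr rfl fun l _ => ?_
          rw [ih l]
      _ = v j := hv j

/-- uniqueness of the stationary probability vector of an irreducible chain -/
lemma stat_unique {M : Matrix X X ℝ} (hM : ∀ i j, 0 ≤ M i j)
    (hirr : ∀ i j, ∃ k : ℕ, 1 ≤ k ∧ 0 < (M ^ k) i j)
    {p q : X → ℝ} (hp0 : ∀ x, 0 ≤ p x) (hq0 : ∀ x, 0 ≤ q x)
    (hps : ∑ x, p x = 1) (hqs : ∑ x, q x = 1)
    (hpstat : ∀ j, ∑ i, p i * M i j = p j)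
    (hqstat : ∀ j, ∑ i, q i * M i j = q j) : p = q := by
  classical
  have hsne : (univ.filter (fun i => 0 < q i)).Nonempty := by
    by_contra hemp
    rw [Finset.not_nonempty_iff_eq_empty, Finset.filter_eq_empty_iff] at hemp
    have : ∑ x, q x = 0 := Finset.sum_eq_zero fun x _ =>
      le_antisymm (not_lt.mp (hemp (Finset.mem_univ x))) (hq0 x)
    rw [hqs] at this
    norm_num at this
  obtain ⟨j0, hj0mem, hj0min⟩ := Finset.exists_min_image _ (fun i => p i / q i) hsne
  rw [Finset.mem_filter] at hj0mem
  have hqj0 : 0 < q j0 := hj0mem.2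
  set c := p j0 / q j0 with hc
  set v : X → ℝ := fun i => p i - c * q i with hv
  have hv0 : ∀ i, 0 ≤ v i := by
    intro i
    by_cases hqi : 0 < q i
    · have := hj0min i (Finset.mem_filter.mpr ⟨Finset.mem_univ i, hqi⟩)
      have : c * q i ≤ p i := by
        rw [← le_div_iff₀ hqi]
        exact this
      simpa [hv] using this
    · have hq0i : q i = 0 := le_antisymm (not_lt.mp hqi) (hq0 i)
      simp [hv, hq0i, hp0 i]
  have hvj0 : v j0 = 0 := by
    simp only [hv, hc]
    field_simp
    ring
  have hvstat : ∀ j, ∑ i, v i * M i j = v j := by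
    intro j
    simp only [hv]
    have : ∀ i, (p i - c * q i) * M i j = p i * M i j - c * (q i * M i j) := by
      intro i; ring
    rw [Finset.sum_congr rfl fun i _ => this i, Finset.sum_sub_distrib,
      ← Finset.mul_sum, hpstat, hqstat]
  have hvzero : ∀ i, v i = 0 := by
    intro i
    obtain ⟨k, -, hk⟩ := hirr i j0
    have hstat := stat_pow hvstat k j0
    rw [hvj0] at hstat
    have hterms : ∀ l ∈ univ, 0 ≤ v l * (M ^ k) l j0 :=
      fun l _ => mul_nonneg (hv0 l) (pow_entry_nonneg hM k l j0)
    have := (Finset.sum_eq_zero_iff_of_nonneg hterms).mp hstat i (Finset.mem_univ i)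
    rcases mul_eq_zero.mp this with h | h
    · exact h
    · exact absurd h (ne_of_gt hk)
  have hpc : ∀ i, p i = c * q i := by
    intro i
    have := hvzero i
    simp only [hv] at this
    linarith
  have hcone : c = 1 := by
    have : ∑ x, p x = c * ∑ x, q x := by
      rw [Finset.mul_sum]
      exact Finset.sum_congr rfl fun x _ => hpc x
    rw [hps, hqs, mul_one] at this
    exact this.symm
  funext i
  rw [hpc i, hcone, one_mul]

lemma reach_of_pow {M : Matrix X X ℝ} (hM : ∀ i j, 0 ≤ M i j) :
    ∀ (k : ℕ) (v r : X), 0 < (M ^ k) v r →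
      Relation.ReflTransGen (fun a b => 0 < M a b) v r := by
  intro k
  induction k with
  | zero =>
    intro v r h
    rw [pow_zero] at h
    by_cases hvr : v = r
    · exact hvr ▸ Relation.ReflTransGen.refl
    · rw [Matrix.one_apply_ne hvr] at h
      exact absurd h (lt_irrefl 0)
  | succ k ih =>
    intro v r h
    rw [pow_succ, Matrix.mul_apply] at h
    have : ∃ l, 0 < (M ^ k) v l * M l r := by
      by_contra hc
      push_neg at hc
      have : ∑ l, (M ^ k) v l * M l r ≤ 0 := Finset.sum_nonpos fun l _ => hc l
      linarith
    obtain ⟨l, hl⟩ := this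
    have h1 : 0 < (M ^ k) v l := by
      rcases (mul_pos_iff.mp hl) with ⟨ha, _⟩ | ⟨ha, hb⟩
      · exact ha
      · exact absurd (hM l r) (not_le.mpr hb)
    have h2 : 0 < M l r := by
      nlinarith [pow_entry_nonneg hM k v l, hM l r]
    exact (ih v l h1).tail h2

lemma crossing {R : X → X → Prop} {S : Finset X} {v r : X}
    (hv : Relation.ReflTransGen R v r) (hrS : r ∈ S) (hvS : v ∉ S) :
    ∃ u w, u ∉ S ∧ w ∈ S ∧ R u w := by
  revert hvS
  induction hv using Relation.ReflTransGen.head_induction_on with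
  | refl => exact fun hvS => absurd hrS hvS
  | head hab hbr ih =>
    rename_i a b
    intro haS
    by_cases hbS : b ∈ S
    · exact ⟨a, b, haS, hbS, hab⟩
    · exact ih hbS

lemma exists_arb_aux (R : X → X → Prop) (r : X)
    (hreach : ∀ v, Relation.ReflTransGen R v r) :
    ∀ (n : ℕ) (S : Finset X) (f : X → X), r ∈ S → Sᶜ.card ≤ n → f r = r →
      (∀ v ∈ S, v ≠ r → R v (f v) ∧ f v ∈ S) → (∀ v ∈ S, ∃ k, f^[k] v = r) →
      ∃ f' : X → X, f' r = r ∧ (∀ v, v ≠ r → R v (f' v)) ∧ ∀ v, ∃ k, f'^[k] v = r := by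
  intro n
  induction n with
  | zero =>
    intro S f hrS hcard hfr hedge hreachS
    have hS : S = univ := by
      have : Sᶜ = ∅ := Finset.card_eq_zero.mp (Nat.le_zero.mp hcard)
      rwa [Finset.compl_eq_empty_iff] at this
    subst hS
    exact ⟨f, hfr, fun v hvr => (hedge v (Finset.mem_univ v) hvr).1,
      fun v => hreachS v (Finset.mem_univ v)⟩
  | succ n ih =>
    intro S f hrS hcard hfr hedge hreachS
    by_cases hS : S = univ
    · subst hS
      exact ⟨f, hfr, fun v hvr => (hedge v (Finset.mem_univ v) hvr).1,
        fun v => hreachS v (Finset.mem_univ v)⟩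
    · have : Sᶜ.Nonempty := by
        rw [Finset.nonempty_iff_ne_empty]
        intro h
        apply hS; rwa [Finset.compl_eq_empty_iff] at h
      obtain ⟨v0, hv0⟩ := this
      rw [Finset.mem_compl] at hv0
      obtain ⟨u, w, huS, hwS, huw⟩ := crossing (hreach v0) hrS hv0
      set f' := Function.update f u w with hf'
      have hur : u ≠ r := fun h => huS (h ▸ hrS)
      have agree : ∀ (k : ℕ) v, v ∈ S → f'^[k] v = f^[k] v := by
        intro k
        induction k with
        | zero => intro v _; rfl
        | succ k ihk =>
          intro v hv
          have hvu : v ≠ u := fun h => huS (h ▸ hv)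
          have hfv : f v ∈ S := by
            by_cases hvr : v = r
            · rw [hvr, hfr]; exact hrS
            · exact (hedge v hv hvr).2
          rw [iterate_succ_apply, iterate_succ_apply, hf',
            Function.update_of_ne hvu]
          exact ihk (f v) hfv
      refine ih (insert u S) f' (Finset.mem_insert_of_mem hrS) ?_ ?_ ?_ ?_
      · rw [Finset.compl_insert]
        have := Finset.card_erase_of_mem (Finset.mem_compl.mpr huS)
        omega
      · rw [hf', Function.update_of_ne (Ne.symm hur), hfr]
      · intro v hv hvr
        rcases Finset.mem_insert.mp hv with rfl | hvS
        · rw [hf', Function.update_self]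
          exact ⟨huw, Finset.mem_insert_of_mem hwS⟩
        · have hvu : v ≠ u := fun h => huS (h ▸ hvS)
          rw [hf', Function.update_of_ne hvu]
          obtain ⟨h1, h2⟩ := hedge v hvS hvr
          exact ⟨h1, Finset.mem_insert_of_mem h2⟩
      · intro v hv
        rcases Finset.mem_insert.mp hv with rfl | hvS
        · obtain ⟨k, hk⟩ := hreachS w hwS
          refine ⟨k + 1, ?_⟩
          rw [iterate_succ_apply, hf', Function.update_self, ← hf',
            agree k w hwS, hk]
        · obtain ⟨k, hk⟩ := hreachS v hvS
          exact ⟨k, by rw [agree k v hvS, hk]⟩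

lemma exists_arb (R : X → X → Prop) (r : X)
    (hreach : ∀ v, Relation.ReflTransGen R v r) :
    ∃ f : X → X, f r = r ∧ (∀ v, v ≠ r → R v (f v)) ∧ ∀ v, ∃ k, f^[k] v = r := by
  classical
  refine exists_arb_aux R r hreach (Finset.card (({r} : Finset X)ᶜ)) {r} id (Finset.mem_singleton_self r)
    le_rfl rfl ?_ ?_
  · intro v hv hvr
    rw [Finset.mem_singleton] at hv
    exact absurd hv hvr
  · intro v hv
    rw [Finset.mem_singleton] at hv
    exact ⟨0, hv⟩

noncomputable def cost (F : X → ℝ) (r : X) (f : X → X) : ℝ :=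
  ∑ v ∈ univ.erase r, max (F (f v) - F v) 0

lemma max_sub_max (a b : ℝ) : max (a - b) 0 - max (b - a) 0 = a - b := by
  rcases le_total a b with h | h
  · rw [max_eq_right (by linarith), max_eq_left (by linarith)]
    ring
  · rw [max_eq_left (by linarith), max_eq_right (by linarith)]
    ring

lemma root_move {E : Set (X × X)} (hEsym : ∀ a b, (a, b) ∈ E → (b, a) ∈ E)
    (F : X → ℝ) {f : X → X} {y u : X} (hfy : f y = y)
    (hedge : ∀ v, v ≠ y → (v, f v) ∈ E) (hreach : ∀ v, ∃ k, f^[k] v = y)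
    (hu : u ≠ y) (hfu : f u = y) :
    ∃ g : X → X, g u = u ∧ (∀ v, v ≠ u → (v, g v) ∈ E) ∧
      (∀ v, ∃ k, g^[k] v = u) ∧ cost F u g = cost F y f + F u - F y ∧
      ∀ v, v ≠ u → v ≠ y → g v = f v := by
  classical
  set g := Function.update (Function.update f u u) y u with hg
  have hgu : g u = u := by
    rw [hg, Function.update_of_ne hu, Function.update_self]
  have hgy : g y = u := by rw [hg, Function.update_self]
  have hgother : ∀ v, v ≠ u → v ≠ y → g v = f v := by
    intro v hvu hvy
    rw [hg, Function.update_of_ne hvy, Function.update_of_ne hvu]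
  refine ⟨g, hgu, ?_, ?_, ?_, hgother⟩
  · intro v hvu
    by_cases hvy : v = y
    · subst hvy
      rw [hgy]
      exact hEsym u v (hfu ▸ hedge u hu)
    · rw [hgother v hvu hvy]
      exact hedge v hvy
  · intro v
    obtain ⟨k, hk⟩ := hreach v
    refine reach_of_agree f g {u, y} u
      (fun w hw => hgother w (fun h => hw (by simp [h])) (fun h => hw (by simp [h])))
      ?_ k v (by simp [hk])
    rintro a (rfl | rfl)
    · exact ⟨0, by simp⟩
    · exact ⟨1, by simp [hgy]⟩
  · have hyu : y ≠ u := Ne.symm hu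
    rw [cost, cost, ← Finset.add_sum_erase _ _
      (Finset.mem_erase.mpr ⟨hyu, Finset.mem_univ y⟩),
      ← Finset.add_sum_erase _ _
      (Finset.mem_erase.mpr ⟨hu, Finset.mem_univ u⟩)]
    rw [hgy, hfu]
    have hsame : ∑ v ∈ (univ.erase u).erase y, max (F (g v) - F v) 0
        = ∑ v ∈ (univ.erase y).erase u, max (F (f v) - F v) 0 := by
      rw [Finset.erase_right_comm]
      refine Finset.sum_congr rfl fun v hv => ?_
      simp only [Finset.mem_erase] at hv
      rw [hgother v hv.1 hv.2.1]
    rw [hsame]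
    have := max_sub_max (F u) (F y)
    linarith

lemma reversal {E : Set (X × X)} (hEsym : ∀ a b, (a, b) ∈ E → (b, a) ∈ E)
    (F : X → ℝ) :
    ∀ (d : ℕ) (f : X → X) (y z : X), f y = y → (∀ v, v ≠ y → (v, f v) ∈ E) →
      (∀ v, ∃ k, f^[k] v = y) → f^[d] z = y →
      ∃ g : X → X, g z = z ∧ (∀ v, v ≠ z → (v, g v) ∈ E) ∧
        (∀ v, ∃ k, g^[k] v = z) ∧ cost F z g ≤ cost F y f + F z - F y := by
  intro d
  induction d using Nat.strong_induction_on with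
  | _ d ih =>
  intro f y z hfy hedge hreach hd
  classical
  have hq : ∃ t, f^[t] z = y := ⟨d, hd⟩
  rcases Nat.eq_zero_or_pos (Nat.find hq) with h0 | hpos
  · have : z = y := by
      have := Nat.find_spec hq
      rwa [h0] at this
    subst this
    exact ⟨f, hfy, hedge, hreach, by linarith⟩
  · obtain ⟨e, he⟩ := Nat.exists_eq_succ_of_ne_zero (Nat.pos_iff_ne_zero.mp hpos)
    have hspec : f^[e + 1] z = y := by
      have := Nat.find_spec hq
      rwa [he] at this
    set u := f^[e] z with hudef
    have hfu : f u = y := by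
      rw [iterate_succ_apply'] at hspec
      exact hspec
    have hu : u ≠ y := by
      intro h
      have : e < Nat.find hq := by omega
      exact Nat.find_min hq this h
    obtain ⟨g₁, hg₁u, hg₁edge, hg₁reach, hg₁cost, hg₁agree⟩ :=
      root_move hEsym F hfy hedge hreach hu hfu
    have hagree : ∀ t, t ≤ e → g₁^[t] z = f^[t] z := by
      intro t ht
      induction t with
      | zero => rfl
      | succ t iht =>
        have ht' : t ≤ e := Nat.le_of_succ_le ht
        have hfind : e < Nat.find hq := by omega
        have h1 : f^[t] z ≠ y := by
          intro h
          exact Nat.find_min hq (by omega) h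
        have h2 : f^[t] z ≠ u := by
          intro h
          have hy1 : f^[t + 1] z = y := by
            rw [iterate_succ_apply', h, hfu]
          exact Nat.find_min hq (by omega) hy1
        rw [iterate_succ_apply', iterate_succ_apply', iht ht',
          hg₁agree _ h2 h1]
    have hg₁z : g₁^[e] z = u := by rw [hagree e le_rfl]
    have hed : e < d := by
      have : Nat.find hq ≤ d := Nat.find_min' hq hd
      omega
    obtain ⟨g, hgz, hgedge, hgreach, hgcost⟩ :=
      ih e hed g₁ u z hg₁u hg₁edge hg₁reach hg₁z
    exact ⟨g, hgz, hgedge, hgreach, by linarith⟩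

lemma no_fix {r : X} {f : X → X} (hf : ∀ v, ∃ k, f^[k] v = r) {v : X}
    (hv : v ≠ r) : f v ≠ v := by
  intro h
  obtain ⟨k, hk⟩ := hf v
  rw [Function.iterate_fixed h] at hk
  exact hv hk

lemma tau_nonneg {m : X → X → ℝ} (hm0 : ∀ i j, 0 ≤ m i j) (r : X) :
    0 ≤ tau m r :=
  Finset.sum_nonneg fun f _ => Finset.prod_nonneg fun v _ => hm0 v (f v)

lemma key_ineq {m : X → X → ℝ} {F : X → ℝ} {E : Set (X × X)} {δ T : ℝ}
    (hδ : 0 < δ) (hδ1 : δ ≤ 1) (hT : 0 < T)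
    (hm0 : ∀ i j, 0 ≤ m i j)
    (hup : ∀ i j, i ≠ j → m i j ≤ Real.exp (-max (F j - F i) 0 / T))
    (hlow : ∀ i j, (i, j) ∈ E → δ * Real.exp (-max (F j - F i) 0 / T) ≤ m i j)
    (hEdge : ∀ i j, i ≠ j → 0 < m i j → (i, j) ∈ E)
    (hEsym : ∀ a b, (a, b) ∈ E → (b, a) ∈ E)
    (y z : X) :
    δ ^ (Fintype.card X) / (Fintype.card (X → X)) *
      Real.exp ((F y - F z) / T) * tau m y ≤ tau m z := by
  classical
  set n := Fintype.card X with hn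
  set Nf : ℝ := (Fintype.card (X → X) : ℝ) with hNf
  have hNfpos : 0 < Nf := by
    rw [hNf]
    have : Nonempty (X → X) := ⟨fun _ => y⟩
    exact_mod_cast Fintype.card_pos
  -- weight upper bound
  have wt_le : ∀ (r : X) (f : X → X), f ∈ arbSet r →
      wt m r f ≤ Real.exp (-(cost F r f) / T) := by
    intro r f hf
    rw [mem_arbSet] at hf
    have : ∀ v ∈ univ.erase r, m v (f v) ≤ Real.exp (-max (F (f v) - F v) 0 / T) := by
      intro v hv
      exact hup v (f v) (Ne.symm (no_fix hf.2 (Finset.ne_of_mem_erase hv)))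
    calc wt m r f ≤ ∏ v ∈ univ.erase r, Real.exp (-max (F (f v) - F v) 0 / T) :=
          Finset.prod_le_prod (fun v _ => hm0 v (f v)) this
      _ = Real.exp (-(cost F r f) / T) := by
          rw [← Real.exp_sum]
          congr 1
          rw [cost, neg_div, Finset.sum_div, ← Finset.sum_neg_distrib]
          exact Finset.sum_congr rfl fun v _ => neg_div _ _
  -- weight lower bound for E-arborescences
  have wt_ge : ∀ (r : X) (f : X → X), (∀ v, v ≠ r → (v, f v) ∈ E) →
      δ ^ n * Real.exp (-(cost F r f) / T) ≤ wt m r f := by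
    intro r f hfE
    have step : ∀ v ∈ univ.erase r,
        δ * Real.exp (-max (F (f v) - F v) 0 / T) ≤ m v (f v) := by
      intro v hv
      exact hlow v (f v) (hfE v (Finset.ne_of_mem_erase hv))
    calc δ ^ n * Real.exp (-(cost F r f) / T)
        ≤ δ ^ (univ.erase r).card * Real.exp (-(cost F r f) / T) := by
          have : δ ^ n ≤ δ ^ (univ.erase r).card := by
            apply pow_le_pow_of_le_one (le_of_lt hδ) hδ1
            calc (univ.erase r).card ≤ univ.card := Finset.card_erase_le.trans le_rfl
              _ = n := rfl
          exact mul_le_mul_of_nonneg_right this (Real.exp_pos _).le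
      _ = ∏ v ∈ univ.erase r, (δ * Real.exp (-max (F (f v) - F v) 0 / T)) := by
          rw [Finset.prod_mul_distrib, Finset.prod_const]
          congr 1
          rw [← Real.exp_sum]
          congr 1
          rw [cost, neg_div, Finset.sum_div, ← Finset.sum_neg_distrib]
          exact Finset.sum_congr rfl fun v _ => (neg_div _ _).symm
      _ ≤ ∏ v ∈ univ.erase r, m v (f v) := by
          apply Finset.prod_le_prod (fun v _ => ?_) step
          positivity
      _ = wt m r f := rfl
  -- main argument
  rcases eq_or_lt_of_le (tau_nonneg hm0 y) with hty | hty
  · rw [← hty, mul_zero]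
    exact tau_nonneg hm0 z
  have hne : (arbSet y).Nonempty := by
    rw [Finset.nonempty_iff_ne_empty]
    intro h
    rw [tau, h, Finset.sum_empty] at hty
    exact lt_irrefl 0 hty
  obtain ⟨f₀, hf₀mem, hf₀max⟩ := Finset.exists_max_image (arbSet y) (wt m y) hne
  have htauy_le : tau m y ≤ Nf * wt m y f₀ := by
    calc tau m y ≤ (arbSet y).card • wt m y f₀ :=
          Finset.sum_le_card_nsmul _ _ _ fun f hf => hf₀max f hf
      _ = ((arbSet y).card : ℝ) * wt m y f₀ := nsmul_eq_mul _ _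
      _ ≤ Nf * wt m y f₀ := by
          apply mul_le_mul_of_nonneg_right _ ?_
          · rw [hNf]
            exact_mod_cast Finset.card_le_univ _
          · -- nonneg of wt
            exact Finset.prod_nonneg fun v _ => hm0 v (f₀ v)
  have hwt₀pos : 0 < wt m y f₀ := by
    by_contra hcon
    push_neg at hcon
    have : Nf * wt m y f₀ ≤ 0 := mul_nonpos_of_nonneg_of_nonpos hNfpos.le hcon
    linarith
  obtain ⟨hf₀y, hf₀reach⟩ := mem_arbSet.mp hf₀mem
  have hf₀E : ∀ v, v ≠ y → (v, f₀ v) ∈ E := by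
    intro v hv
    have hmpos : 0 < m v (f₀ v) := by
      rcases eq_or_lt_of_le (hm0 v (f₀ v)) with h | h
      · exfalso
        have : wt m y f₀ = 0 :=
          Finset.prod_eq_zero (Finset.mem_erase.mpr ⟨hv, Finset.mem_univ v⟩) h.symm
        rw [this] at hwt₀pos
        exact lt_irrefl 0 hwt₀pos
      · exact h
    exact hEdge v (f₀ v) (Ne.symm (no_fix hf₀reach hv)) hmpos
  obtain ⟨d, hd⟩ := hf₀reach z
  obtain ⟨g, hgz, hgE, hgreach, hgcost⟩ :=
    reversal hEsym F d f₀ y z hf₀y hf₀E hf₀reach hd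
  have hgmem : g ∈ arbSet z := mem_arbSet.mpr ⟨hgz, hgreach⟩
  have htauz : wt m z g ≤ tau m z :=
    Finset.single_le_sum (f := fun f => wt m z f)
      (fun f _ => Finset.prod_nonneg fun v _ => hm0 v (f v)) hgmem
  have hchain : δ ^ n * Real.exp ((F y - F z) / T) * wt m y f₀ ≤ tau m z := by
    have h1 : δ ^ n * Real.exp (-(cost F z g) / T) ≤ wt m z g := wt_ge z g hgE
    have h2 : Real.exp (-(cost F y f₀ + F z - F y) / T) ≤
        Real.exp (-(cost F z g) / T) := by
      apply Real.exp_le_exp.mpr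
      rw [div_le_div_iff_of_pos_right hT]
      linarith
    have hexp : Real.exp (-(cost F y f₀ + F z - F y) / T)
        = Real.exp ((F y - F z) / T) * Real.exp (-(cost F y f₀) / T) := by
      rw [← Real.exp_add]
      congr 1
      field_simp
      ring
    have h3 : wt m y f₀ ≤ Real.exp (-(cost F y f₀) / T) := wt_le y f₀ hf₀mem
    have hpow : (0:ℝ) < δ ^ n := pow_pos hδ n
    calc δ ^ n * Real.exp ((F y - F z) / T) * wt m y f₀
        ≤ δ ^ n * Real.exp ((F y - F z) / T) * Real.exp (-(cost F y f₀) / T) := by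
          apply mul_le_mul_of_nonneg_left h3
          positivity
      _ = δ ^ n * Real.exp (-(cost F y f₀ + F z - F y) / T) := by
          rw [hexp]; ring
      _ ≤ δ ^ n * Real.exp (-(cost F z g) / T) :=
          mul_le_mul_of_nonneg_left h2 hpow.le
      _ ≤ wt m z g := h1
      _ ≤ tau m z := htauz
  have hfinal : δ ^ n / Nf * Real.exp ((F y - F z) / T) * tau m y
      ≤ δ ^ n * Real.exp ((F y - F z) / T) * wt m y f₀ := by
    have hc : (0:ℝ) ≤ δ ^ n / Nf * Real.exp ((F y - F z) / T) := by positivity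
    calc δ ^ n / Nf * Real.exp ((F y - F z) / T) * tau m y
        ≤ δ ^ n / Nf * Real.exp ((F y - F z) / T) * (Nf * wt m y f₀) :=
          mul_le_mul_of_nonneg_left htauy_le hc
      _ = δ ^ n * Real.exp ((F y - F z) / T) * wt m y f₀ := by
          field_simp
  exact hfinal.trans hchain

end AuxiliarySimulatedAnnealing

/-- Convergence of generalized simulated annealing with temperature-dependent
generation matrices `A(T)`, Metropolis acceptance probabilities `P(T)` for the
objective `F`, transition matrices `M(T)`, stationary distributions `π_T` with
zero-temperature limit `π*`: under the uniform positivity (i), temperature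
independence of the neighborhood graph (ii) and its weak reversibility (iii),
`π*(x) > 0` iff `x` is a global minimum of `F`. -/
theorem generalized_simulated_annealing_convergence
    {X : Type*} [Fintype X] [DecidableEq X] [Nonempty X]
    (F : X → ℝ)
    -- the generation matrices `A(T)` are row-stochastic for every `T > 0`
    (A : ℝ → Matrix X X ℝ)
    (hA_nonneg : ∀ T, 0 < T → ∀ i j, 0 ≤ A T i j)
    (hA_rowsum : ∀ T, 0 < T → ∀ i, ∑ j, A T i j = 1)
    -- the acceptance probabilities
    (P : ℝ → X → X → ℝ)
    (hP : ∀ T, 0 < T → ∀ i j, P T i j =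
      if F j < F i then 1 else Real.exp (-(F j - F i) / T))
    -- the transition matrices
    (M : ℝ → Matrix X X ℝ)
    (hM_off : ∀ T, 0 < T → ∀ i j, i ≠ j → M T i j = A T i j * P T i j)
    (hM_diag : ∀ T, 0 < T → ∀ i,
      M T i i = 1 - ∑ j ∈ Finset.univ.erase i, M T i j)
    -- (a) irreducibility: every state is accessible from every state
    (hirr : ∀ T, 0 < T → ∀ i j, ∃ k : ℕ, 1 ≤ k ∧ 0 < (M T ^ k) i j)
    -- (a) aperiodicity: the gcd of the return times of every state is 1
    (haper : ∀ T, 0 < T → ∀ i, ∀ d : ℕ,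
      (∀ k : ℕ, 1 ≤ k → 0 < (M T ^ k) i i → d ∣ k) → d = 1)
    -- (a) `π_T` is a stationary probability distribution of `M(T)`
    (pi : ℝ → X → ℝ)
    (hpi_nonneg : ∀ T, 0 < T → ∀ x, 0 ≤ pi T x)
    (hpi_sum : ∀ T, 0 < T → ∑ x, pi T x = 1)
    (hpi_stat : ∀ T, 0 < T → ∀ j, ∑ i, pi T i * M T i j = pi T j)
    -- (b) the zero-temperature limit `π*` of `π_T` exists
    (pistar : X → ℝ)
    (hlim : Tendsto pi (nhdsWithin 0 (Set.Ioi 0)) (nhds pistar))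
    -- (i) uniform positivity of the generation probabilities
    (hdelta : ∃ δ : ℝ, 0 < δ ∧
      ∀ T, 0 < T → ∀ i j, i ≠ j → 0 < A T i j → δ ≤ A T i j)
    -- (ii) the neighborhood graph does not depend on `T`
    (E : Set (X × X))
    (hE : ∀ T, 0 < T → ∀ i j : X, (i, j) ∈ E ↔ i ≠ j ∧ 0 < A T i j)
    -- (iii) the neighborhood graph is weakly reversible
    (hrev : ∀ Ftil : ℝ, ∀ x y : X,
      ExistsPathBelow E F Ftil x y ↔ ExistsPathBelow E F Ftil y x) :
    ∀ x : X, 0 < pistar x ↔ ∀ y : X, F x ≤ F y := by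

  classical
  obtain ⟨δ, hδpos, hδbound⟩ := hdelta
  set δ' : ℝ := min δ 1 with hδ'
  have hδ'pos : 0 < δ' := lt_min hδpos one_pos
  have hδ'1 : δ' ≤ 1 := min_le_right _ _
  -- global minimum
  obtain ⟨x₀, -, hx₀⟩ := Finset.exists_min_image Finset.univ F Finset.univ_nonempty
  -- symmetry of E from weak reversibility
  have hEsym : ∀ a b : X, (a, b) ∈ E → (b, a) ∈ E := by
    intro a b hab
    have h1 : ExistsPathBelow E F (F x₀ - 1) a b :=
      ⟨[], List.isChain_pair.mpr hab,
        fun v hv => absurd hv List.not_mem_nil⟩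
    obtain ⟨l, hchain, hbelow⟩ := (hrev (F x₀ - 1) a b).mp h1
    cases l with
    | nil =>
      rw [List.nil_append] at hchain
      exact List.isChain_pair.mp hchain
    | cons v l' =>
      exfalso
      have := hbelow v (List.mem_cons_self)
      have := hx₀ v (Finset.mem_univ v)
      linarith
  have hNfpos : (0:ℝ) < (Fintype.card (X → X) : ℝ) := by
    have : Nonempty (X → X) := ⟨fun _ => x₀⟩
    exact_mod_cast Fintype.card_pos
  set c : ℝ := δ' ^ Fintype.card X / (Fintype.card (X → X) : ℝ) with hc
  have hcpos : 0 < c := by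
    rw [hc]
    positivity
  -- the key comparison for the stationary distributions
  have keyT : ∀ T, 0 < T → ∀ y z : X,
      c * Real.exp ((F y - F z) / T) * pi T y ≤ pi T z := by
    intro T hT
    have hA1 : ∀ i j, A T i j ≤ 1 := by
      intro i j
      calc A T i j ≤ ∑ k, A T i k :=
            Finset.single_le_sum (fun k _ => hA_nonneg T hT i k) (Finset.mem_univ j)
        _ = 1 := hA_rowsum T hT i
    have hPform : ∀ i j, P T i j = Real.exp (-max (F j - F i) 0 / T) := by
      intro i j
      rw [hP T hT]
      split_ifs with h
      · rw [max_eq_right (by linarith), neg_zero, zero_div, Real.exp_zero]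
      · rw [max_eq_left (by push_neg at h; linarith)]
    have hPpos : ∀ i j, 0 < P T i j := by
      intro i j
      rw [hPform]
      exact Real.exp_pos _
    have hPle1 : ∀ i j, P T i j ≤ 1 := by
      intro i j
      rw [hPform]
      rw [Real.exp_le_one_iff]
      apply div_nonpos_of_nonpos_of_nonneg _ hT.le
      simp [le_max_right]
    have hoffle : ∀ i j, i ≠ j → M T i j ≤ A T i j := by
      intro i j hij
      rw [hM_off T hT i j hij]
      calc A T i j * P T i j ≤ A T i j * 1 :=
            mul_le_mul_of_nonneg_left (hPle1 i j) (hA_nonneg T hT i j)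
        _ = A T i j := mul_one _
    have hoff0 : ∀ i j, i ≠ j → 0 ≤ M T i j := by
      intro i j hij
      rw [hM_off T hT i j hij]
      exact mul_nonneg (hA_nonneg T hT i j) (hPpos i j).le
    have hm0 : ∀ i j, 0 ≤ M T i j := by
      intro i j
      by_cases hij : i = j
      · subst hij
        rw [hM_diag T hT i]
        have h1 : ∑ j ∈ Finset.univ.erase i, M T i j
            ≤ ∑ j ∈ Finset.univ.erase i, A T i j :=
          Finset.sum_le_sum fun j hj =>
            hoffle i j (Ne.symm (Finset.ne_of_mem_erase hj))
        have h2 : ∑ j ∈ Finset.univ.erase i, A T i j = 1 - A T i i := by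
          have := hA_rowsum T hT i
          rw [← Finset.add_sum_erase _ _ (Finset.mem_univ i)] at this
          linarith
        have := hA_nonneg T hT i i
        linarith
      · exact hoff0 i j hij
    have hrow : ∀ i, ∑ j, M T i j = 1 := by
      intro i
      rw [← Finset.add_sum_erase _ _ (Finset.mem_univ i), hM_diag T hT i]
      ring
    have hup : ∀ i j, i ≠ j → M T i j ≤ Real.exp (-max (F j - F i) 0 / T) := by
      intro i j hij
      rw [hM_off T hT i j hij, ← hPform i j]
      calc A T i j * P T i j ≤ 1 * P T i j :=
            mul_le_mul_of_nonneg_right (hA1 i j) (hPpos i j).le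
        _ = P T i j := one_mul _
    have hlow : ∀ i j, (i, j) ∈ E →
        δ' * Real.exp (-max (F j - F i) 0 / T) ≤ M T i j := by
      intro i j hij
      obtain ⟨hne, hApos⟩ := (hE T hT i j).mp hij
      rw [hM_off T hT i j hne, ← hPform i j]
      apply mul_le_mul_of_nonneg_right _ (hPpos i j).le
      exact le_trans (min_le_left _ _) (hδbound T hT i j hne hApos)
    have hEdge : ∀ i j, i ≠ j → 0 < M T i j → (i, j) ∈ E := by
      intro i j hij hpos
      rw [hM_off T hT i j hij] at hpos
      refine (hE T hT i j).mpr ⟨hij, ?_⟩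
      by_contra hA
      push_neg at hA
      have : A T i j = 0 := le_antisymm hA (hA_nonneg T hT i j)
      rw [this, zero_mul] at hpos
      exact lt_irrefl 0 hpos
    -- positivity of the total tree weight
    have hreach : ∀ r v : X, Relation.ReflTransGen (fun a b => 0 < M T a b) v r := by
      intro r v
      obtain ⟨k, -, hk⟩ := hirr T hT v r
      exact reach_of_pow hm0 k v r hk
    have htaupos : ∀ r : X, ∃ x : X, 0 < tau (M T) x := by
      intro r
      obtain ⟨f, hfr, hfR, hfreach⟩ :=
        exists_arb (fun a b => 0 < M T a b) r (hreach r)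
      refine ⟨r, ?_⟩
      have hwt : 0 < wt (M T) r f :=
        Finset.prod_pos fun v hv => hfR v (Finset.ne_of_mem_erase hv)
      have hle : wt (M T) r f ≤ tau (M T) r :=
        Finset.single_le_sum (f := fun f => wt (M T) r f)
          (fun f _ => Finset.prod_nonneg fun v _ => hm0 v (f v))
          (mem_arbSet.mpr ⟨hfr, hfreach⟩)
      linarith
    obtain ⟨xp, hxp⟩ := htaupos x₀
    set S : ℝ := ∑ x, tau (M T) x with hS
    have hSpos : 0 < S := by
      rw [hS]
      have hle : tau (M T) xp ≤ ∑ x, tau (M T) x :=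
        Finset.single_le_sum (fun x _ => tau_nonneg hm0 x) (Finset.mem_univ xp)
      linarith
    set q : X → ℝ := fun x => tau (M T) x / S with hq
    have hq0 : ∀ x, 0 ≤ q x := fun x => div_nonneg (tau_nonneg hm0 x) hSpos.le
    have hqs : ∑ x, q x = 1 := by
      rw [hq, ← Finset.sum_div, ← hS, div_self (ne_of_gt hSpos)]
    have hqstat : ∀ j, ∑ i, q i * M T i j = q j := by
      intro j
      rw [hq]
      calc ∑ i, tau (M T) i / S * M T i j
          = (∑ i, tau (M T) i * M T i j) / S := by
            rw [Finset.sum_div]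
            exact Finset.sum_congr rfl fun i _ => by ring
        _ = tau (M T) j / S := by rw [tau_stat (M T) hrow j]
    have hpieq : pi T = q :=
      stat_unique hm0 (hirr T hT) (hpi_nonneg T hT) hq0 (hpi_sum T hT) hqs
        (hpi_stat T hT) hqstat
    intro y z
    have hkey := key_ineq hδ'pos hδ'1 hT hm0 hup hlow hEdge hEsym y z
    rw [hpieq]
    have hqy : q y = tau (M T) y / S := rfl
    have hqz : q z = tau (M T) z / S := rfl
    rw [hqy, hqz, hc]
    calc δ' ^ Fintype.card X / (Fintype.card (X → X) : ℝ) *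
          Real.exp ((F y - F z) / T) * (tau (M T) y / S)
        = (δ' ^ Fintype.card X / (Fintype.card (X → X) : ℝ) *
          Real.exp ((F y - F z) / T) * tau (M T) y) / S := by ring
      _ ≤ tau (M T) z / S := (div_le_div_iff_of_pos_right hSpos).mpr hkey
  -- componentwise limits
  have hlimx : ∀ x : X, Tendsto (fun T => pi T x) (𝓝[>] (0:ℝ)) (𝓝 (pistar x)) :=
    fun x => tendsto_pi_nhds.mp hlim x
  have hcard : (0:ℝ) < (Fintype.card X : ℝ) := by exact_mod_cast Fintype.card_pos
  -- minima have positive limiting mass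
  have hminpos : ∀ x : X, (∀ y, F x ≤ F y) → 0 < pistar x := by
    intro x hx
    have hbound : ∀ T, 0 < T → c / (Fintype.card X : ℝ) ≤ pi T x := by
      intro T hT
      have h1 : ∀ z, c * pi T z ≤ pi T x := by
        intro z
        have hk := keyT T hT z x
        have hexp : (1:ℝ) ≤ Real.exp ((F z - F x) / T) := by
          rw [Real.one_le_exp_iff]
          apply div_nonneg _ hT.le
          have := hx z
          linarith
        calc c * pi T z = c * 1 * pi T z := by ring
          _ ≤ c * Real.exp ((F z - F x) / T) * pi T z := by
              apply mul_le_mul_of_nonneg_right _ (hpi_nonneg T hT z)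
              exact mul_le_mul_of_nonneg_left hexp hcpos.le
          _ ≤ pi T x := hk
      have h2 : c ≤ (Fintype.card X : ℝ) * pi T x := by
        have hs := Finset.sum_le_sum (fun z (_ : z ∈ Finset.univ) => h1 z)
        rw [← Finset.mul_sum, hpi_sum T hT, mul_one, Finset.sum_const,
          nsmul_eq_mul, Finset.card_univ] at hs
        exact hs
      rw [div_le_iff₀ hcard]
      linarith
    have hge := ge_of_tendsto (hlimx x)
      (Filter.eventually_of_mem self_mem_nhdsWithin fun T hT => hbound T hT)
    have : (0:ℝ) < c / (Fintype.card X : ℝ) := by positivity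
    linarith
  -- non-minima have zero limiting mass
  have hnotmin : ∀ x : X, (∃ y, F y < F x) → pistar x = 0 := by
    rintro x ⟨y0, hy0⟩
    have hapos : 0 < F x - F x₀ := by
      have := hx₀ y0 (Finset.mem_univ y0)
      linarith
    have hub : ∀ T, 0 < T → pi T x ≤ c⁻¹ * Real.exp (-(F x - F x₀) / T) := by
      intro T hT
      have hk := keyT T hT x x₀
      have hpi1 : pi T x₀ ≤ 1 := by
        have hle := Finset.single_le_sum (fun z (_ : z ∈ Finset.univ) =>
          hpi_nonneg T hT z) (Finset.mem_univ x₀)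
        rw [hpi_sum T hT] at hle
        exact hle
      have h3 : c * Real.exp ((F x - F x₀) / T) * pi T x ≤ 1 := le_trans hk hpi1
      have hpos : (0:ℝ) < c * Real.exp ((F x - F x₀) / T) := by positivity
      have h4 : pi T x ≤ 1 / (c * Real.exp ((F x - F x₀) / T)) := by
        rw [le_div_iff₀ hpos]
        linarith
      calc pi T x ≤ 1 / (c * Real.exp ((F x - F x₀) / T)) := h4
        _ = c⁻¹ * Real.exp (-(F x - F x₀) / T) := by
            rw [neg_div, Real.exp_neg, one_div, mul_inv]
    have htend : Tendsto (fun T : ℝ => c⁻¹ * Real.exp (-(F x - F x₀) / T))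
        (𝓝[>] (0:ℝ)) (𝓝 0) := by
      have h1 : Tendsto (fun T : ℝ => -(F x - F x₀) / T) (𝓝[>] (0:ℝ)) atBot := by
        have h2 : Tendsto (fun T : ℝ => (F x - F x₀) * T⁻¹) (𝓝[>] (0:ℝ)) atTop :=
          tendsto_inv_nhdsGT_zero.const_mul_atTop hapos
        have hfe : (fun T : ℝ => -(F x - F x₀) / T)
            = fun T : ℝ => -((F x - F x₀) * T⁻¹) := by
          funext T
          rw [div_eq_mul_inv]
          ring
        rw [hfe]
        exact tendsto_neg_atTop_atBot.comp h2
      have h3 : Tendsto (fun T : ℝ => Real.exp (-(F x - F x₀) / T))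
          (𝓝[>] (0:ℝ)) (𝓝 0) := Real.tendsto_exp_atBot.comp h1
      have h4 := h3.const_mul c⁻¹
      simpa using h4
    have hle : pistar x ≤ 0 :=
      le_of_tendsto_of_tendsto (hlimx x) htend
        (Filter.eventually_of_mem self_mem_nhdsWithin fun T hT => hub T hT)
    have hge : 0 ≤ pistar x :=
      ge_of_tendsto (hlimx x)
        (Filter.eventually_of_mem self_mem_nhdsWithin fun T hT => hpi_nonneg T hT x)
    linarith
  intro x
  constructor
  · intro hpos
    by_contra hnot
    push_neg at hnot
    obtain ⟨y, hy⟩ := hnot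
    rw [hnotmin x ⟨y, hy⟩] at hpos
    exact lt_irrefl 0 hpos
  · exact hminpos x
end

section
/- Let n ≥ 1 and z_b ∈ {−1,1}^n. Define the energy E(z) = Σ_{i=1}^n z_{b,i} z_i + Σ_{1 ≤ i < j ≤ n} z_{b,i} z_{b,j} z_i z_j for z ∈ {−1,1}^n. Then E attains its maximum over {−1,1}^n uniquely at z = z_b, where E(z_b) = n + n(n−1)/2; that is, E(z) < n + n(n−1)/2 for every z ∈ {−1,1}^n with z ≠ z_b. -/
lemma ioi_pair_sum (n : ℕ) (w : Fin n → ℝ) (hw : ∀ i, w i * w i = 1) :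
    ∑ i, ∑ j ∈ Finset.Ioi i, w i * w j = ((∑ i, w i) ^ 2 - n) / 2 := by
  have h := Finset.sum_sum_Ioi_add_eq_sum_sum_off_diag (fun i j : Fin n => w i * w j)
  have h2 : ∑ i, ∑ j ∈ Finset.Ioi i, (w j * w i + w i * w j)
      = 2 * ∑ i, ∑ j ∈ Finset.Ioi i, w i * w j := by
    rw [Finset.mul_sum]
    refine Finset.sum_congr rfl fun i _ => ?_
    rw [Finset.mul_sum]
    exact Finset.sum_congr rfl fun j _ => by ring
  have h3 : ∑ i : Fin n, ∑ j ∈ ({i}ᶜ : Finset (Fin n)), w j * w i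
      = (∑ i, w i) ^ 2 - n := by
    have : ∀ i : Fin n, ∑ j ∈ ({i}ᶜ : Finset (Fin n)), w j * w i
        = ((∑ j, w j) - w i) * w i := by
      intro i
      rw [← Finset.sum_mul, Finset.compl_singleton,
        Finset.sum_erase_eq_sub (Finset.mem_univ i)]
    rw [Finset.sum_congr rfl fun i _ => this i]
    have e : ∀ i : Fin n, ((∑ j, w j) - w i) * w i
        = (∑ j, w j) * w i - w i * w i := fun i => by ring
    rw [Finset.sum_congr rfl fun i _ => e i, Finset.sum_sub_distrib, ← Finset.mul_sum]
    simp [hw]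
    ring
  rw [h2] at h
  have h4 : 2 * ∑ i, ∑ j ∈ Finset.Ioi i, w i * w j = (∑ i, w i) ^ 2 - n := by
    rw [h]
    rw [← h3]
  linarith

/-- With single-candidate tabu weights `θ_i = z_{b,i}`, `θ_ij = z_{b,i} z_{b,j}`,
the Ising energy `E(z) = Σ_i z_{b,i} z_i + Σ_{i<j} z_{b,i} z_{b,j} z_i z_j` attains
its maximum over `{−1,1}^n` uniquely at `z = z_b`, where `E(z_b) = n + n(n−1)/2`. -/
theorem tabu_single_candidate_unique_max (n : ℕ) (hn : 1 ≤ n)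
    (zb : Fin n → ℝ) (hzb : ∀ i, zb i = 1 ∨ zb i = -1) :
    ((∑ i, zb i * zb i) +
        (∑ i, ∑ j ∈ Finset.Ioi i, zb i * zb j * (zb i * zb j)) =
      (n : ℝ) + (n : ℝ) * ((n : ℝ) - 1) / 2) ∧
    (∀ z : Fin n → ℝ, (∀ i, z i = 1 ∨ z i = -1) → z ≠ zb →
      (∑ i, zb i * z i) +
          (∑ i, ∑ j ∈ Finset.Ioi i, zb i * zb j * (z i * z j)) <
        (n : ℝ) + (n : ℝ) * ((n : ℝ) - 1) / 2) := by
  have key : ∀ z : Fin n → ℝ, (∀ i, z i = 1 ∨ z i = -1) →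
      (∑ i, zb i * z i) + (∑ i, ∑ j ∈ Finset.Ioi i, zb i * zb j * (z i * z j))
      = (∑ i, zb i * z i) + (((∑ i, zb i * z i) ^ 2 - n) / 2) := by
    intro z hz
    congr 1
    have hw : ∀ i, (zb i * z i) * (zb i * z i) = 1 := by
      intro i
      rcases hzb i with h1 | h1 <;> rcases hz i with h2 | h2 <;> rw [h1, h2] <;> norm_num
    have := ioi_pair_sum n (fun i => zb i * z i) hw
    calc ∑ i, ∑ j ∈ Finset.Ioi i, zb i * zb j * (z i * z j)
        = ∑ i, ∑ j ∈ Finset.Ioi i, (zb i * z i) * (zb j * z j) := by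
          refine Finset.sum_congr rfl fun i _ => Finset.sum_congr rfl fun j _ => by ring
      _ = ((∑ i, zb i * z i) ^ 2 - n) / 2 := this
  constructor
  · rw [key zb hzb]
    have hS : (∑ i, zb i * zb i) = (n : ℝ) := by
      have : ∀ i, zb i * zb i = 1 := fun i => by rcases hzb i with h | h <;> rw [h] <;> norm_num
      simp [this]
    rw [hS]; ring
  · intro z hz hne
    rw [key z hz]
    set S := ∑ i, zb i * z i with hSdef
    have hwi : ∀ i, zb i * z i = 1 ∨ zb i * z i = -1 := by
      intro i
      rcases hzb i with h1 | h1 <;> rcases hz i with h2 | h2 <;> rw [h1, h2] <;> norm_num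
    obtain ⟨i0, hi0⟩ : ∃ i, z i ≠ zb i := by
      by_contra h
      push_neg at h
      exact hne (funext h)
    have hwneg : zb i0 * z i0 = -1 := by
      rcases hzb i0 with h1 | h1 <;> rcases hz i0 with h2 | h2 <;>
        simp_all <;> norm_num at *
    have hrest : ∑ i ∈ Finset.univ.erase i0, zb i * z i ≤ (n : ℝ) - 1 := by
      have h1 : ∑ i ∈ Finset.univ.erase i0, zb i * z i
          ≤ ∑ _i ∈ Finset.univ.erase i0, (1 : ℝ) := by
        refine Finset.sum_le_sum fun i _ => ?_
        rcases hwi i with h | h <;> rw [h] <;> norm_num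
      have h2 : ∑ _i ∈ Finset.univ.erase i0, (1 : ℝ)
          = ((Finset.univ.erase i0).card : ℝ) := by simp
      have h3 : ((Finset.univ.erase i0).card : ℝ) = (n : ℝ) - 1 := by
        rw [Finset.card_erase_of_mem (Finset.mem_univ i0), Finset.card_univ,
          Fintype.card_fin, Nat.cast_sub hn]
        norm_num
      linarith
    have hSle : S ≤ (n : ℝ) - 2 := by
      have hsplit : ∑ i ∈ Finset.univ.erase i0, zb i * z i + zb i0 * z i0 = S :=
        Finset.sum_erase_add _ _ (Finset.mem_univ i0)
      linarith
    have hSge : -(n : ℝ) ≤ S := by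
      have : ∑ _i : Fin n, (-1 : ℝ) ≤ S := by
        refine Finset.sum_le_sum fun i _ => ?_
        rcases hwi i with h | h <;> rw [h] <;> norm_num
      simpa using this
    nlinarith [hSle, hSge]
end
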